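/- Let G be the group of a Wirtinger presentation on n generators with s relators, given by maps a, b : Fin s → Fin n and words w : Fin s → FreeGroup (Fin n). If T is a subset of Fin n containing at least one index from each equivalence class of the equivalence relation generated by the pairs (a q, b q), then the normal closure in G of the set of images of the generators {x_t : t ∈ T} is all of G. In particular, if there are exactly k equivalence classes, then G is normally generated by k elements. -/
import Mathlib

def wirtingerRels (n s : ℕ) (a b : Fin s → Fin n) (w : Fin s → FreeGroup (Fin n)) :
    Set (FreeGroup (Fin n)) :=
  { r | ∃ q : Fin s,
      r = (FreeGroup.of (a q))⁻¹ * (w q)⁻¹ * FreeGroup.of (b q) * w q }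

def wirtingerEdge (n s : ℕ) (a b : Fin s → Fin n) (i j : Fin n) : Prop :=
  ∃ q : Fin s, a q = i ∧ b q = j

lemma wirtinger_conj_aux {G : Type*} [Group G] (x y u : G) (h : x⁻¹ * u⁻¹ * y * u = 1) :
    y = u * x * u⁻¹ := by
  have h2 : u * x * (x⁻¹ * u⁻¹ * y * u) * u⁻¹ = u * x * 1 * u⁻¹ := by rw [h]
  group at h2
  simpa [zpow_neg] using h2

lemma wirtinger_key_conj (n s : ℕ) (a b : Fin s → Fin n) (w : Fin s → FreeGroup (Fin n))
    (q : Fin s) :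
    (PresentedGroup.of (rels := wirtingerRels n s a b w) (b q)) =
      (PresentedGroup.mk (wirtingerRels n s a b w) (w q)) *
        PresentedGroup.of (a q) * (PresentedGroup.mk (wirtingerRels n s a b w) (w q))⁻¹ := by
  have h : (PresentedGroup.mk (wirtingerRels n s a b w))
      ((FreeGroup.of (a q))⁻¹ * (w q)⁻¹ * FreeGroup.of (b q) * w q) = 1 := by
    apply (QuotientGroup.eq_one_iff _).mpr
    exact Subgroup.subset_normalClosure ⟨q, rfl⟩
  simp only [map_mul, map_inv] at h
  exact wirtinger_conj_aux _ _ _ h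

lemma wirtinger_mem_iff (n s : ℕ) (a b : Fin s → Fin n) (w : Fin s → FreeGroup (Fin n))
    (N : Subgroup (PresentedGroup (wirtingerRels n s a b w))) (hN : N.Normal)
    {t i : Fin n} (h : Relation.EqvGen (wirtingerEdge n s a b) t i) :
    (PresentedGroup.of (rels := wirtingerRels n s a b w) t ∈ N ↔
      PresentedGroup.of (rels := wirtingerRels n s a b w) i ∈ N) := by
  induction h with
  | rel x y hxy =>
    obtain ⟨q, hx, hy⟩ := hxy
    subst hx; subst hy
    rw [wirtinger_key_conj n s a b w q]
    constructor
    · intro hm; exact hN.conj_mem _ hm _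
    · intro hm
      have := hN.conj_mem _ hm (PresentedGroup.mk (wirtingerRels n s a b w) (w q))⁻¹
      simpa [mul_assoc] using this
  | refl x => exact Iff.rfl
  | symm x y _ ih => exact ih.symm
  | trans x y z _ _ ih1 ih2 => exact ih1.trans ih2

lemma wirtinger_part1 (n s : ℕ) (a b : Fin s → Fin n) (w : Fin s → FreeGroup (Fin n))
    (T : Set (Fin n))
    (hT : ∀ i : Fin n, ∃ t ∈ T, Relation.EqvGen (wirtingerEdge n s a b) t i) :
    Subgroup.normalClosure
      (PresentedGroup.of (rels := wirtingerRels n s a b w) '' T) = ⊤ := by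
  rw [eq_top_iff]
  rw [← PresentedGroup.closure_range_of (wirtingerRels n s a b w)]
  apply Subgroup.closure_le _ |>.mpr
  rintro _ ⟨i, rfl⟩
  obtain ⟨t, ht, hrel⟩ := hT i
  exact (wirtinger_mem_iff n s a b w _ Subgroup.normalClosure_normal hrel).mp
    (Subgroup.subset_normalClosure ⟨t, ht, rfl⟩)

theorem wirtinger_group_normally_generated
    (n s : ℕ) (a b : Fin s → Fin n) (w : Fin s → FreeGroup (Fin n)) :
    (∀ T : Set (Fin n),
      (∀ i : Fin n, ∃ t ∈ T, Relation.EqvGen (wirtingerEdge n s a b) t i) →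
      Subgroup.normalClosure
        (PresentedGroup.of (rels := wirtingerRels n s a b w) '' T) = ⊤) ∧
    ∀ k : ℕ, Nat.card (Quot (wirtingerEdge n s a b)) = k →
      ∃ f : Fin k → Fin n,
        Subgroup.normalClosure
          (Set.range fun q => PresentedGroup.of (rels := wirtingerRels n s a b w) (f q)) = ⊤ := by
  refine ⟨wirtinger_part1 n s a b w, ?_⟩
  intro k hk
  have : Finite (Quot (wirtingerEdge n s a b)) := Quot.finite _
  have ft : Fintype (Quot (wirtingerEdge n s a b)) := Fintype.ofFinite _
  have e : Quot (wirtingerEdge n s a b) ≃ Fin k :=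
    Fintype.equivFinOfCardEq (by rw [← Nat.card_eq_fintype_card, hk])
  choose rep hrep using fun c : Quot (wirtingerEdge n s a b) => Quot.exists_rep c
  refine ⟨fun q => rep (e.symm q), ?_⟩
  have himg : (Set.range fun q => PresentedGroup.of (rels := wirtingerRels n s a b w)
      ((fun q => rep (e.symm q)) q)) =
      PresentedGroup.of (rels := wirtingerRels n s a b w) ''
        (Set.range fun q : Fin k => rep (e.symm q)) := by
    rw [← Set.range_comp]; rfl
  rw [himg]
  apply wirtinger_part1
  intro i
  refine ⟨rep (e.symm (e (Quot.mk _ i))), ⟨e (Quot.mk _ i), rfl⟩, ?_⟩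
  have : Quot.mk (wirtingerEdge n s a b) (rep (e.symm (e (Quot.mk _ i)))) =
      Quot.mk (wirtingerEdge n s a b) i := by
    rw [hrep, Equiv.symm_apply_apply]
  exact (Quot.eq.mp this)
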